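/- Exactness of the super-third boundary stencil on cubic polynomials: Let h > 0 and λ = 6. Let u be any polynomial of total degree at most 3, f = Δu, and g(y) = −u_x(0,y). Then (1/(6h²))[(4)u(0,y−h) + 2u(h,y−h) − 20u(0,y) + 8u(h,y) + 4u(0,y+h) + 2u(h,y+h)] = (1/6)[4 f(0,y) + 2 f(h,y)] − (2/h) g(y). -/

import Mathlib

noncomputable def pdx (u : ℝ → ℝ → ℝ) : ℝ → ℝ → ℝ := fun x y => deriv (fun s => u s y) x
noncomputable def pdy (u : ℝ → ℝ → ℝ) : ℝ → ℝ → ℝ := fun x y => deriv (fun t => u x t) y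

lemma cubic_deriv (a b c d x : ℝ) :
    deriv (fun s : ℝ => a + b * s + c * s ^ 2 + d * s ^ 3) x
      = b + 2 * c * x + 3 * d * x ^ 2 := by
  have h1 : HasDerivAt (fun s : ℝ => b * s) b x := by
    simpa using (hasDerivAt_id x).const_mul b
  have h2 : HasDerivAt (fun s : ℝ => c * s ^ 2) (c * (2 * x)) x := by
    simpa using (hasDerivAt_pow 2 x).const_mul c
  have h3 : HasDerivAt (fun s : ℝ => d * s ^ 3) (d * (3 * x ^ 2)) x := by
    simpa using (hasDerivAt_pow 3 x).const_mul d
  have H := (((hasDerivAt_const x a).add h1).add h2).add h3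
  have H' : HasDerivAt (fun s : ℝ => a + b * s + c * s ^ 2 + d * s ^ 3)
      (b + 2 * c * x + 3 * d * x ^ 2) x := by
    exact H.congr_deriv (by ring)
  exact H'.deriv

/-- Exactness of the super-third boundary stencil on polynomials of total degree ≤ 3,
with `f = Δu` and `g(y) = −u_x(0,y)`. -/
theorem super_third_boundary_stencil_exact_on_cubics (u : ℝ → ℝ → ℝ) (c : ℕ → ℕ → ℝ)
    (hu : ∀ x y : ℝ, u x y =
      ∑ k₁ ∈ Finset.range 4, ∑ k₂ ∈ Finset.range 4,
        if k₁ + k₂ ≤ 3 then c k₁ k₂ * x ^ k₁ * y ^ k₂ else 0)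
    (f : ℝ → ℝ → ℝ) (hf : ∀ x y : ℝ, f x y = pdx (pdx u) x y + pdy (pdy u) x y)
    (g : ℝ → ℝ) (hg : ∀ y : ℝ, g y = -pdx u 0 y)
    (h : ℝ) (hh : 0 < h) (y : ℝ) :
    (1 / (6 * h ^ 2)) *
        (4 * u 0 (y - h) + 2 * u h (y - h) - 20 * u 0 y + 8 * u h y
          + 4 * u 0 (y + h) + 2 * u h (y + h))
      = (1 / 6) * (4 * f 0 y + 2 * f h y) - (2 / h) * g y := by
  have key : ∀ x y : ℝ, u x y =
      (c 0 0 + c 0 1 * y + c 0 2 * y ^ 2 + c 0 3 * y ^ 3)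
      + (c 1 0 + c 1 1 * y + c 1 2 * y ^ 2) * x
      + (c 2 0 + c 2 1 * y) * x ^ 2 + c 3 0 * x ^ 3 := by
    intro x y
    rw [hu]
    simp [Finset.sum_range_succ]
    ring
  have hdx : ∀ x y : ℝ, pdx u x y =
      (c 1 0 + c 1 1 * y + c 1 2 * y ^ 2)
      + 2 * (c 2 0 + c 2 1 * y) * x + 3 * (c 3 0) * x ^ 2 := by
    intro x y
    show deriv (fun s => u s y) x = _
    rw [show (fun s => u s y) = fun s : ℝ =>
        (c 0 0 + c 0 1 * y + c 0 2 * y ^ 2 + c 0 3 * y ^ 3)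
        + (c 1 0 + c 1 1 * y + c 1 2 * y ^ 2) * s
        + (c 2 0 + c 2 1 * y) * s ^ 2 + c 3 0 * s ^ 3 from funext fun s => key s y]
    rw [cubic_deriv]
  have hdxx : ∀ x y : ℝ, pdx (pdx u) x y =
      2 * (c 2 0 + c 2 1 * y) + 6 * c 3 0 * x := by
    intro x y
    show deriv (fun s => pdx u s y) x = _
    rw [show (fun s => pdx u s y) = fun s : ℝ =>
        (c 1 0 + c 1 1 * y + c 1 2 * y ^ 2)
        + (2 * (c 2 0 + c 2 1 * y)) * s + (3 * c 3 0) * s ^ 2 + 0 * s ^ 3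
      from funext fun s => by rw [hdx]; ring]
    rw [cubic_deriv]; ring
  have hdy : ∀ x y : ℝ, pdy u x y =
      (c 0 1 + c 1 1 * x + c 2 1 * x ^ 2)
      + 2 * (c 0 2 + c 1 2 * x) * y + 3 * (c 0 3) * y ^ 2 := by
    intro x y
    show deriv (fun t => u x t) y = _
    rw [show (fun t => u x t) = fun t : ℝ =>
        (c 0 0 + c 1 0 * x + c 2 0 * x ^ 2 + c 3 0 * x ^ 3)
        + (c 0 1 + c 1 1 * x + c 2 1 * x ^ 2) * t
        + (c 0 2 + c 1 2 * x) * t ^ 2 + c 0 3 * t ^ 3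
      from funext fun t => by rw [key]; ring]
    rw [cubic_deriv]
  have hdyy : ∀ x y : ℝ, pdy (pdy u) x y =
      2 * (c 0 2 + c 1 2 * x) + 6 * c 0 3 * y := by
    intro x y
    show deriv (fun t => pdy u x t) y = _
    rw [show (fun t => pdy u x t) = fun t : ℝ =>
        (c 0 1 + c 1 1 * x + c 2 1 * x ^ 2)
        + (2 * (c 0 2 + c 1 2 * x)) * t + (3 * c 0 3) * t ^ 2 + 0 * t ^ 3
      from funext fun t => by rw [hdy]; ring]
    rw [cubic_deriv]; ring
  rw [hf, hf, hg, hdxx, hdxx, hdyy, hdyy, hdx,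
    key 0 (y - h), key h (y - h), key 0 y, key h y, key 0 (y + h), key h (y + h)]
  have hh' : h ≠ 0 := ne_of_gt hh
  field_simp
  ring
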